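/- arXiv:1105.3641 — 2 statements merged into one kernel-verified Lean document; each statement's English description precedes it below -/
import Mathlib

section
/- Let T be a directed tree, and let λ^{(i)} = {λ^{(i)}_v}_{v∈V°} (i = 1,2,3,…) and λ = {λ_v}_{v∈V°} be families of complex numbers such that: (i) the linear span E of {e_u : u ∈ V} satisfies E ⊆ D^∞(S_λ) ∩ ⋂_{i=1}^∞ D^∞(S_{λ^{(i)}}); (ii) lim_{i→∞} λ^{(i)}_v = λ_v for all v ∈ V°; (iii) lim_{i→∞} ‖S_{λ^{(i)}}^n e_u‖ = ‖S_λ^n e_u‖ for all n ∈ ℤ₊ and u ∈ V. Then ⟨S_λ^m e_u, S_λ^n e_v⟩ = lim_{i→∞} ⟨S_{λ^{(i)}}^m e_u, S_{λ^{(i)}}^n e_v⟩ for all u, v ∈ V and m, n ∈ ℤ₊. -/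
open MeasureTheory ENNReal
open scoped NNReal
noncomputable section

/-- `μ` is a representing measure of the sequence `t`. -/
def IsRepMeasure (μ : Measure ℝ≥0) (t : ℕ → ℝ) : Prop :=
  ∀ n : ℕ, Integrable (fun s : ℝ≥0 => (s : ℝ) ^ n) μ ∧ t n = ∫ s, (s : ℝ) ^ n ∂μ

/-- `t` is a Stieltjes moment sequence. -/
def IsStieltjesMoment (t : ℕ → ℝ) : Prop := ∃ μ : Measure ℝ≥0, IsRepMeasure μ t

/-- `t` is a determinate Stieltjes moment sequence. -/
def IsDetStieltjesMoment (t : ℕ → ℝ) : Prop := ∃! μ : Measure ℝ≥0, IsRepMeasure μ t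

section Operators

universe u
variable {H : Type u} [NormedAddCommGroup H] [InnerProductSpace ℂ H]

/-- The maximal domain of the composition `S ∘ T`. -/
def compDomain (S T : H →ₗ.[ℂ] H) : Submodule ℂ H where
  carrier := {x | ∃ hx : x ∈ T.domain, T ⟨x, hx⟩ ∈ S.domain}
  zero_mem' := ⟨T.domain.zero_mem, by
    have h0 : (⟨0, T.domain.zero_mem⟩ : T.domain) = 0 := rfl
    rw [h0, LinearPMap.map_zero]; exact S.domain.zero_mem⟩
  add_mem' := by
    rintro x y ⟨hx, hx'⟩ ⟨hy, hy'⟩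
    refine ⟨T.domain.add_mem hx hy, ?_⟩
    have : (⟨x + y, T.domain.add_mem hx hy⟩ : T.domain) = ⟨x, hx⟩ + ⟨y, hy⟩ := rfl
    rw [this, LinearPMap.map_add]
    exact S.domain.add_mem hx' hy'
  smul_mem' := by
    rintro c x ⟨hx, hx'⟩
    refine ⟨T.domain.smul_mem c hx, ?_⟩
    have : (⟨c • x, T.domain.smul_mem c hx⟩ : T.domain) = c • (⟨x, hx⟩ : T.domain) := rfl
    rw [this, LinearPMap.map_smul]
    exact S.domain.smul_mem c hx'

/-- Composition `S ∘ T` of partial operators, on the maximal domain. -/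
def pmapComp (S T : H →ₗ.[ℂ] H) : H →ₗ.[ℂ] H :=
  S.comp (T.domRestrict (compDomain S T)) (by
    rintro ⟨x, hx⟩
    have hxT : x ∈ T.domain := (Submodule.mem_inf.mp hx).2
    have hxD : x ∈ compDomain S T := (Submodule.mem_inf.mp hx).1
    erw [LinearPMap.domRestrict_apply (show ((⟨x, hx⟩ : ↥(compDomain S T ⊓ T.domain)) : H)
      = ((⟨x, hxT⟩ : T.domain) : H) from rfl)]
    exact hxD.choose_spec)

/-- Powers of a partial operator: `pmapPow S n = Sⁿ` with its natural domain. -/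
def pmapPow (S : H →ₗ.[ℂ] H) : ℕ → (H →ₗ.[ℂ] H)
  | 0 => LinearMap.id.toPMap ⊤
  | n + 1 => pmapComp (pmapPow S n) S

open Classical in
/-- Total (junk-valued) application of the power `Sⁿ`. -/
def powApp (S : H →ₗ.[ℂ] H) (n : ℕ) (x : H) : H :=
  if h : x ∈ (pmapPow S n).domain then (pmapPow S n) ⟨x, h⟩ else 0

/-- The set of `C^∞`-vectors of `S`. -/
def Dinf (S : H →ₗ.[ℂ] H) : Set H := {x | ∀ n : ℕ, x ∈ (pmapPow S n).domain}

/-- `F` is a core of `S`. -/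
def IsCore (S : H →ₗ.[ℂ] H) (F : Submodule ℂ H) : Prop :=
  F ≤ S.domain ∧ (S.graph : Set (H × H)) ⊆ closure ((S.domRestrict F).graph : Set (H × H))

end Operators
section Operators
universe u
variable {H : Type u} [NormedAddCommGroup H] [InnerProductSpace ℂ H]

/-- A normal (unbounded) operator: closed, densely defined, with `D(N*) = D(N)` and
`‖N* x‖ = ‖N x‖` on the common domain. -/
def IsNormalOp [CompleteSpace H] (N : H →ₗ.[ℂ] H) : Prop :=
  Dense (N.domain : Set H) ∧ N.IsClosed ∧ N.adjoint.domain = N.domain ∧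
    ∀ (x : H) (hx : x ∈ N.domain) (hx' : x ∈ N.adjoint.domain),
      ‖N.adjoint ⟨x, hx'⟩‖ = ‖N ⟨x, hx⟩‖

/-- A subnormal operator: densely defined with a normal extension in a possibly
larger Hilbert space. -/
def IsSubnormal {H : Type u} [NormedAddCommGroup H] [InnerProductSpace ℂ H]
    (S : H →ₗ.[ℂ] H) : Prop :=
  Dense (S.domain : Set H) ∧
  ∃ (K : Type u) (_ : NormedAddCommGroup K) (_ : InnerProductSpace ℂ K) (_ : CompleteSpace K)
    (J : H →ₗᵢ[ℂ] K) (N : K →ₗ.[ℂ] K), IsNormalOp N ∧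
      ∀ x : S.domain, ∃ hx : J x ∈ N.domain, N ⟨J x, hx⟩ = J (S x)

/-- A hyponormal operator. -/
def IsHyponormal [CompleteSpace H] (S : H →ₗ.[ℂ] H) : Prop :=
  Dense (S.domain : Set H) ∧
  ∀ (x : H) (hx : x ∈ S.domain), ∃ hx' : x ∈ S.adjoint.domain,
      ‖S.adjoint ⟨x, hx'⟩‖ ≤ ‖S ⟨x, hx⟩‖

end Operators

/-- A directed tree on the vertex set `V`: a connected directed graph without circuits
in which every non-root vertex has a unique parent. -/
structure DirectedTree (V : Type*) where
  edge : V → V → Prop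
  connected : ∀ u v : V, Relation.ReflTransGen (fun a b => edge a b ∨ edge b a) u v
  no_circuits : ∀ v : V, ¬ Relation.TransGen edge v v
  parent_unique : ∀ u v w : V, edge v u → edge w u → v = w

namespace DirectedTree

variable {V : Type*}

/-- The roots: vertices with no incoming edge. -/
def isRoot (T : DirectedTree V) (v : V) : Prop := ¬ ∃ u : V, T.edge u v

/-- `V°`: the non-root vertices, i.e. vertices having a parent. -/
def nonRoot (T : DirectedTree V) (v : V) : Prop := ∃ u : V, T.edge u v

open Classical in
/-- The parent function (with junk value at roots). -/
def par (T : DirectedTree V) (v : V) : V := if h : ∃ u : V, T.edge u v then h.choose else v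

/-- The set of children of a vertex. -/
def chi (T : DirectedTree V) (u : V) : Set V := {v | T.edge u v}

/-- Iterated children `Chi^n(u)`. -/
def chiN (T : DirectedTree V) : ℕ → V → Set V
  | 0, u => {u}
  | n + 1, u => ⋃ w ∈ T.chiN n u, T.chi w

/-- The descendants of `u`. -/
def des (T : DirectedTree V) (u : V) : Set V := ⋃ n : ℕ, T.chiN n u

/-- `T` is leafless: every vertex has a child. -/
def Leafless (T : DirectedTree V) : Prop := ∀ u : V, ∃ v : V, T.edge u v

/-- The product `λ_{u∣v} = ∏_{j=0}^{n-1} λ_{par^j(v)}` of the weights along the path of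
length `n` ending at `v` (for `v ∈ Chi^n(u)` this is the usual `λ_{u∣v}`). -/
def pathProd (T : DirectedTree V) (lam : V → ℂ) (n : ℕ) (v : V) : ℂ :=
  ∏ j ∈ Finset.range n, lam (T.par^[j] v)

open Classical in
/-- The formal weighted-shift transformation `Λ_T` on families of complex numbers. -/
def lamMap (T : DirectedTree V) (lam : V → ℂ) (f : V → ℂ) : V → ℂ :=
  fun v => if T.nonRoot v then lam v * f (T.par v) else 0

variable (T : DirectedTree V)

theorem lamMap_add (lam : V → ℂ) (f g : V → ℂ) :
    T.lamMap lam (f + g) = T.lamMap lam f + T.lamMap lam g := by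
  funext v; simp only [lamMap, Pi.add_apply]; split <;> ring

theorem lamMap_smul (lam : V → ℂ) (c : ℂ) (f : V → ℂ) :
    T.lamMap lam (c • f) = c • T.lamMap lam f := by
  funext v; simp only [lamMap, Pi.smul_apply, smul_eq_mul]; split <;> ring

theorem lamMap_zero (lam : V → ℂ) : T.lamMap lam (0 : V → ℂ) = 0 := by
  funext v; simp [lamMap]

/-- The domain of the weighted shift `S_λ`. -/
def shiftDomain (lam : V → ℂ) : Submodule ℂ (lp (fun _ : V => ℂ) 2) where
  carrier := {f | Memℓp (T.lamMap lam f) 2}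
  zero_mem' := by
    rw [Set.mem_setOf_eq, lp.coeFn_zero, lamMap_zero]
    exact zero_memℓp
  add_mem' := by
    intro f g hf hg
    rw [Set.mem_setOf_eq, lp.coeFn_add, lamMap_add]
    exact hf.add hg
  smul_mem' := by
    intro c f hf
    rw [Set.mem_setOf_eq, lp.coeFn_smul, lamMap_smul]
    exact hf.const_smul c

/-- The weighted shift `S_λ` on the directed tree `T`, as a partial operator in `ℓ²(V)`. -/
def shift (lam : V → ℂ) : lp (fun _ : V => ℂ) 2 →ₗ.[ℂ] lp (fun _ : V => ℂ) 2 where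
  domain := T.shiftDomain lam
  toFun :=
    { toFun := fun f => (⟨T.lamMap lam f, f.2⟩ : lp (fun _ : V => ℂ) 2)
      map_add' := by
        rintro f g
        apply lp.ext
        rw [lp.coeFn_add]
        show T.lamMap lam
            ((((f : lp (fun _ : V => ℂ) 2) : V → ℂ)) + (((g : lp (fun _ : V => ℂ) 2) : V → ℂ)))
          = T.lamMap lam ((f : lp (fun _ : V => ℂ) 2) : V → ℂ)
            + T.lamMap lam ((g : lp (fun _ : V => ℂ) 2) : V → ℂ)
        exact T.lamMap_add lam _ _
      map_smul' := by
        rintro c f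
        apply lp.ext
        rw [lp.coeFn_smul]
        show T.lamMap lam (c • (((f : lp (fun _ : V => ℂ) 2) : V → ℂ)))
          = c • T.lamMap lam ((f : lp (fun _ : V => ℂ) 2) : V → ℂ)
        exact T.lamMap_smul lam c _ }

end DirectedTree

open Classical in
/-- The basis vector `e_u` of `ℓ²(V)`. -/
def eVec {V : Type*} (u : V) : lp (fun _ : V => ℂ) 2 := lp.single 2 u 1

section MoreDefs
universe u
variable {H : Type u} [NormedAddCommGroup H] [InnerProductSpace ℂ H]

/-- The inner product, linear in the FIRST argument (the paper's convention). -/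
def innerPaper (x y : H) : ℂ := inner ℂ y x

/-- The moment sequence `n ↦ ‖Sⁿ f‖²` generated by the vector `f`. -/
def momentSeq (S : H →ₗ.[ℂ] H) (f : H) : ℕ → ℝ := fun n => ‖powApp S n f‖ ^ 2

/-- `f` is a quasi-analytic vector of `S` : `f ∈ D^∞(S)` and
`∑ₙ ‖Sⁿ f‖^{-1/n} = ∞` (with `1/0 = ∞`). -/
def IsQuasiAnalyticVec (S : H →ₗ.[ℂ] H) (f : H) : Prop :=
  (∀ n : ℕ, f ∈ (pmapPow S n).domain) ∧
  ∑' n : ℕ, ((‖powApp S (n + 1) f‖₊ ^ ((1 : ℝ) / (n + 1)) : ℝ≥0) : ℝ≥0∞)⁻¹ = ∞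

end MoreDefs

/-- The consistency condition `μ_u(σ) = ∑_{v ∈ Chi(u)} |λ_v|² ∫_σ (1/s) dμ_v(s) + ε_u δ₀(σ)`
at the vertex `u` (with the convention `1/0 = ∞`). -/
def consistentAt {V : Type*} (T : DirectedTree V) (lam : V → ℂ) (μ : V → MeasureTheory.Measure ℝ≥0)
    (ε : V → ℝ≥0) (u : V) : Prop :=
  ∀ σ : Set ℝ≥0, MeasurableSet σ →
    μ u σ = (∑' v : {v : V // T.edge u v},
        (‖lam (v : V)‖₊ : ℝ≥0∞) ^ 2 * ∫⁻ s in σ, ((s : ℝ≥0∞))⁻¹ ∂(μ (v : V)))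
      + (ε u : ℝ≥0∞) * MeasureTheory.Measure.dirac (0 : ℝ≥0) σ

/-- The sequence `{ϑ, t₀, t₁, t₂, …}` obtained by prepending `ϑ` to `t`. -/
def shiftedSeq (ϑ : ℝ) (t : ℕ → ℝ) : ℕ → ℝ := fun n => match n with
  | 0 => ϑ
  | n + 1 => t n

/-- A positive definite sequence of real numbers. -/
def IsPosDefSeq (t : ℕ → ℝ) : Prop :=
  ∀ (n : ℕ) (α : ℕ → ℂ),
    0 ≤ (∑ k ∈ Finset.range (n + 1), ∑ l ∈ Finset.range (n + 1),
        (t (k + l) : ℂ) * α k * (starRingEnd ℂ) (α l)).re ∧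
    (∑ k ∈ Finset.range (n + 1), ∑ l ∈ Finset.range (n + 1),
        (t (k + l) : ℂ) * α k * (starRingEnd ℂ) (α l)).im = 0


section AuxStmt6

universe u'
variable {H : Type u'} [NormedAddCommGroup H] [InnerProductSpace ℂ H]

lemma aux_pow_succ_memS {S : H →ₗ.[ℂ] H} {n : ℕ} {x : H}
    (hx : x ∈ (pmapPow S (n + 1)).domain) : x ∈ S.domain :=
  (Submodule.mem_inf.mp hx).2

lemma aux_pow_succ_memC {S : H →ₗ.[ℂ] H} {n : ℕ} {x : H}
    (hx : x ∈ (pmapPow S (n + 1)).domain) :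
    S ⟨x, aux_pow_succ_memS hx⟩ ∈ (pmapPow S n).domain := by
  have hxC : ∃ h : x ∈ S.domain, S ⟨x, h⟩ ∈ (pmapPow S n).domain :=
    (Submodule.mem_inf.mp hx).1
  obtain ⟨h1, h2⟩ := hxC
  have he : (⟨x, h1⟩ : S.domain) = ⟨x, aux_pow_succ_memS hx⟩ := rfl
  rwa [he] at h2

lemma aux_powApp_succ {S : H →ₗ.[ℂ] H} {n : ℕ} {x : H}
    (hx : x ∈ (pmapPow S (n + 1)).domain) :
    powApp S (n + 1) x = powApp S n (S ⟨x, aux_pow_succ_memS hx⟩) := by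
  rw [powApp, dif_pos hx, powApp, dif_pos (aux_pow_succ_memC hx)]
  rfl

lemma aux_powApp_shift_coe {V : Type*} (T : DirectedTree V) (lam : V → ℂ) :
    ∀ (n : ℕ) (f : lp (fun _ : V => ℂ) 2), f ∈ (pmapPow (T.shift lam) n).domain →
      ∀ w : V, ((powApp (T.shift lam) n f : lp (fun _ : V => ℂ) 2) : V → ℂ) w
        = (T.lamMap lam)^[n] ((f : lp (fun _ : V => ℂ) 2) : V → ℂ) w := by
  intro n
  induction n with
  | zero =>
    intro f hf w
    rw [powApp, dif_pos hf]
    rfl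
  | succ n ih =>
    intro f hf w
    rw [aux_powApp_succ hf]
    rw [ih _ (aux_pow_succ_memC hf)]
    have hco : (((T.shift lam) ⟨f, aux_pow_succ_memS hf⟩ : lp (fun _ : V => ℂ) 2) : V → ℂ)
        = T.lamMap lam ((f : lp (fun _ : V => ℂ) 2) : V → ℂ) := rfl
    rw [hco, ← Function.iterate_succ_apply]

lemma aux_iter_tendsto {V : Type*} (T : DirectedTree V) (lamSeq : ℕ → V → ℂ) (lam : V → ℂ)
    (h2 : ∀ v : V, T.nonRoot v →
      Filter.Tendsto (fun i : ℕ => lamSeq i v) Filter.atTop (nhds (lam v)))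
    (f : V → ℂ) : ∀ (n : ℕ) (w : V),
    Filter.Tendsto (fun i : ℕ => (T.lamMap (lamSeq i))^[n] f w) Filter.atTop
      (nhds ((T.lamMap lam)^[n] f w)) := by
  intro n
  induction n with
  | zero => intro w; simpa using tendsto_const_nhds
  | succ n ih =>
    intro w
    simp only [Function.iterate_succ_apply']
    by_cases h : T.nonRoot w
    · simp only [DirectedTree.lamMap, if_pos h]
      exact (h2 w h).mul (ih (T.par w))
    · simp only [DirectedTree.lamMap, if_neg h]
      exact tendsto_const_nhds

lemma aux_tendsto_lp {V : Type*} (x : ℕ → lp (fun _ : V => ℂ) 2) (y : lp (fun _ : V => ℂ) 2)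
    (hc : ∀ w : V, Filter.Tendsto (fun i : ℕ => ((x i : lp (fun _ : V => ℂ) 2) : V → ℂ) w)
      Filter.atTop (nhds ((y : V → ℂ) w)))
    (hn : Filter.Tendsto (fun i : ℕ => ‖x i‖) Filter.atTop (nhds ‖y‖)) :
    Filter.Tendsto x Filter.atTop (nhds y) := by
  classical
  obtain ⟨C, hC⟩ := hn.bddAbove_range
  have hCb : ∀ i : ℕ, ‖x i‖ ≤ C := fun i => hC (Set.mem_range_self i)
  have hC0 : 0 ≤ C := le_trans (norm_nonneg _) (hCb 0)
  -- convergence of ⟪y, x i⟫ to ⟪y, y⟫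
  have key : Filter.Tendsto (fun i : ℕ => (inner ℂ y (x i) : ℂ) - inner ℂ y y)
      Filter.atTop (nhds 0) := by
    rw [NormedAddCommGroup.tendsto_nhds_zero]
    intro ε hε
    have hDpos : 0 < ‖y‖ + C + 1 := by positivity
    set δ : ℝ := ε / (2 * (‖y‖ + C + 1)) with hδdef
    have hδ : 0 < δ := by positivity
    -- truncation of y
    have hsum := lp.hasSum_single (E := fun _ : V => ℂ) (by norm_num : (2 : ℝ≥0∞) ≠ ⊤) y
    have h1 : ∀ᶠ F in (Filter.atTop : Filter (Finset V)),
        dist (∑ w ∈ F, lp.single 2 w ((y : V → ℂ) w)) y < δ :=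
      Metric.tendsto_nhds.mp hsum δ hδ
    obtain ⟨F, hF⟩ := Filter.eventually_atTop.mp h1
    set yF : lp (fun _ : V => ℂ) 2 := ∑ w ∈ F, lp.single 2 w ((y : V → ℂ) w) with hyFdef
    have hyF : ‖yF - y‖ < δ := by
      rw [← dist_eq_norm]
      exact hF F le_rfl
    have hyF' : ‖y - yF‖ < δ := by rwa [norm_sub_rev]
    -- inner with the truncation is a finite sum of coordinates
    have hform : ∀ z : lp (fun _ : V => ℂ) 2, (inner ℂ yF z : ℂ)
        = ∑ w ∈ F, (starRingEnd ℂ) ((y : V → ℂ) w) * ((z : V → ℂ) w) := by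
      intro z
      rw [hyFdef, sum_inner]
      refine Finset.sum_congr rfl fun w _ => ?_
      rw [lp.inner_single_left]
      simp [RCLike.inner_apply, mul_comm]
    have hfin : Filter.Tendsto (fun i : ℕ => (inner ℂ yF (x i) : ℂ)) Filter.atTop
        (nhds (inner ℂ yF y)) := by
      simp only [hform]
      exact tendsto_finset_sum _ fun w _ => tendsto_const_nhds.mul (hc w)
    have h2ev : ∀ᶠ i in (Filter.atTop : Filter ℕ),
        ‖(inner ℂ yF (x i) : ℂ) - inner ℂ yF y‖ < ε / 2 := by
      have := NormedAddCommGroup.tendsto_nhds_zero.mp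
        (by simpa using hfin.sub (tendsto_const_nhds (x := (inner ℂ yF y : ℂ))))
      exact this (ε / 2) (half_pos hε)
    filter_upwards [h2ev] with i hi
    have hsplit : ∀ z : lp (fun _ : V => ℂ) 2,
        (inner ℂ y z : ℂ) = inner ℂ (y - yF) z + inner ℂ yF z := by
      intro z; rw [inner_sub_left]; ring
    have hb1 : ‖(inner ℂ (y - yF) (x i) : ℂ)‖ ≤ δ * C :=
      le_trans (norm_inner_le_norm _ _)
        (mul_le_mul (le_of_lt hyF') (hCb i) (norm_nonneg _) (le_of_lt hδ))
    have hb2 : ‖(inner ℂ (y - yF) y : ℂ)‖ ≤ δ * ‖y‖ :=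
      le_trans (norm_inner_le_norm _ _)
        (mul_le_mul_of_nonneg_right (le_of_lt hyF') (norm_nonneg _))
    have hδe : δ * (‖y‖ + C + 1) = ε / 2 := by
      rw [hδdef]; field_simp
    have hstep : ‖(inner ℂ y (x i) : ℂ) - inner ℂ y y‖
        ≤ ‖(inner ℂ (y - yF) (x i) : ℂ)‖ + ‖(inner ℂ (y - yF) y : ℂ)‖
          + ‖(inner ℂ yF (x i) : ℂ) - inner ℂ yF y‖ := by
      rw [hsplit (x i), hsplit y]
      calc ‖(inner ℂ (y - yF) (x i) : ℂ) + inner ℂ yF (x i)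
            - ((inner ℂ (y - yF) y : ℂ) + inner ℂ yF y)‖
          = ‖((inner ℂ (y - yF) (x i) : ℂ) - inner ℂ (y - yF) y)
            + ((inner ℂ yF (x i) : ℂ) - inner ℂ yF y)‖ := by ring_nf
        _ ≤ ‖(inner ℂ (y - yF) (x i) : ℂ) - inner ℂ (y - yF) y‖
            + ‖(inner ℂ yF (x i) : ℂ) - inner ℂ yF y‖ := norm_add_le _ _
        _ ≤ (‖(inner ℂ (y - yF) (x i) : ℂ)‖ + ‖(inner ℂ (y - yF) y : ℂ)‖)
            + ‖(inner ℂ yF (x i) : ℂ) - inner ℂ yF y‖ := by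
              gcongr; exact norm_sub_le _ _
    have : δ * C + δ * ‖y‖ + ε / 2 < ε := by nlinarith [norm_nonneg y]
    calc ‖(inner ℂ y (x i) : ℂ) - inner ℂ y y‖
        ≤ ‖(inner ℂ (y - yF) (x i) : ℂ)‖ + ‖(inner ℂ (y - yF) y : ℂ)‖
          + ‖(inner ℂ yF (x i) : ℂ) - inner ℂ yF y‖ := hstep
      _ ≤ δ * C + δ * ‖y‖ + ε / 2 := by linarith [hb1, hb2, hi]
      _ < ε := this
  have hinner : Filter.Tendsto (fun i : ℕ => (inner ℂ y (x i) : ℂ)) Filter.atTop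
      (nhds (inner ℂ y y)) := by
    have := key.add (tendsto_const_nhds (x := (inner ℂ y y : ℂ)))
    simpa using this
  -- norm squared of difference tends to zero
  have hsq : Filter.Tendsto
      (fun i : ℕ => ‖x i‖ ^ 2 - 2 * RCLike.re (inner ℂ y (x i) : ℂ) + ‖y‖ ^ 2)
      Filter.atTop (nhds (‖y‖ ^ 2 - 2 * RCLike.re (inner ℂ y y : ℂ) + ‖y‖ ^ 2)) :=
    ((hn.pow 2).sub
      (tendsto_const_nhds.mul ((RCLike.continuous_re.tendsto _).comp hinner))).add
      tendsto_const_nhds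
  have hlim0 : ‖y‖ ^ 2 - 2 * RCLike.re (inner ℂ y y : ℂ) + ‖y‖ ^ 2 = 0 := by
    rw [inner_self_eq_norm_sq]; ring
  have h0 : Filter.Tendsto (fun i : ℕ => ‖x i - y‖ ^ 2) Filter.atTop (nhds 0) := by
    rw [← hlim0]
    refine hsq.congr fun i => ?_
    rw [inner_re_symm, ← norm_sub_sq (𝕜 := ℂ) (x i) y]
  rw [tendsto_iff_norm_sub_tendsto_zero]
  have hs : Filter.Tendsto (fun i : ℕ => Real.sqrt (‖x i - y‖ ^ 2)) Filter.atTop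
      (nhds (Real.sqrt 0)) := (Real.continuous_sqrt.tendsto 0).comp h0
  refine hs.congr' ?_ |>.mono_right ?_
  · exact Filter.Eventually.of_forall fun i => Real.sqrt_sq (norm_nonneg _)
  · simp

end AuxStmt6

/-- stability of mixed inner products of powers of weighted shifts under
pointwise convergence of weights together with convergence of the norms of powers. -/
theorem stmt6 {V : Type*} (T : DirectedTree V) (lamSeq : ℕ → V → ℂ) (lam : V → ℂ)
    (h1 : (Submodule.span ℂ (Set.range (eVec (V := V))) : Set (lp (fun _ : V => ℂ) 2)) ⊆ Dinf (T.shift lam)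
      ∧ ∀ i : ℕ, (Submodule.span ℂ (Set.range (eVec (V := V))) : Set (lp (fun _ : V => ℂ) 2)) ⊆ Dinf (T.shift (lamSeq i)))
    (h2 : ∀ v : V, T.nonRoot v →
      Filter.Tendsto (fun i : ℕ => lamSeq i v) Filter.atTop (nhds (lam v)))
    (h3 : ∀ (n : ℕ) (u : V),
      Filter.Tendsto (fun i : ℕ => ‖powApp (T.shift (lamSeq i)) n (eVec u)‖)
        Filter.atTop (nhds ‖powApp (T.shift lam) n (eVec u)‖)) :
    ∀ (u v : V) (m n : ℕ),
      Filter.Tendsto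
        (fun i : ℕ => innerPaper (powApp (T.shift (lamSeq i)) m (eVec u))
          (powApp (T.shift (lamSeq i)) n (eVec v)))
        Filter.atTop
        (nhds (innerPaper (powApp (T.shift lam) m (eVec u))
          (powApp (T.shift lam) n (eVec v)))) := by
  intro u v m n
  have memspan : ∀ w : V, (eVec w : lp (fun _ : V => ℂ) 2)
      ∈ (Submodule.span ℂ (Set.range (eVec (V := V))) : Set (lp (fun _ : V => ℂ) 2)) :=
    fun w => Submodule.subset_span (Set.mem_range_self w)
  have hdinf : ∀ w : V, ∀ k : ℕ, eVec w ∈ (pmapPow (T.shift lam) k).domain :=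
    fun w k => h1.1 (memspan w) k
  have hdinf' : ∀ (i : ℕ) (w : V) (k : ℕ),
      eVec w ∈ (pmapPow (T.shift (lamSeq i)) k).domain :=
    fun i w k => h1.2 i (memspan w) k
  have strong : ∀ (k : ℕ) (w : V),
      Filter.Tendsto (fun i : ℕ => powApp (T.shift (lamSeq i)) k (eVec w)) Filter.atTop
        (nhds (powApp (T.shift lam) k (eVec w))) := by
    intro k w
    refine aux_tendsto_lp _ _ ?_ (h3 k w)
    intro z
    have hrw : ∀ i : ℕ,
        ((powApp (T.shift (lamSeq i)) k (eVec w) : lp (fun _ : V => ℂ) 2) : V → ℂ) z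
          = (T.lamMap (lamSeq i))^[k] ((eVec w : lp (fun _ : V => ℂ) 2) : V → ℂ) z :=
      fun i => aux_powApp_shift_coe T (lamSeq i) k _ (hdinf' i w k) z
    have hrw' : ((powApp (T.shift lam) k (eVec w) : lp (fun _ : V => ℂ) 2) : V → ℂ) z
        = (T.lamMap lam)^[k] ((eVec w : lp (fun _ : V => ℂ) 2) : V → ℂ) z :=
      aux_powApp_shift_coe T lam k _ (hdinf w k) z
    simp only [hrw, hrw']
    exact aux_iter_tendsto T lamSeq lam h2 _ k z
  simp only [innerPaper]
  exact (strong n v).inner (𝕜 := ℂ) (strong m u)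

end
end

section
/- Let S_λ be a weighted shift on a directed tree T with weights λ = {λ_v}_{v∈V°} such that the linear span of {e_u : u ∈ V} is contained in D^∞(S_λ). Assume that for every u ∈ V having at least one child, {‖S_λ^n e_u‖²}_{n=0}^∞ is a Stieltjes moment sequence and {‖S_λ^{n+1} e_u‖²}_{n=0}^∞ is a determinate Stieltjes moment sequence. Then there exist a system {μ_u}_{u∈V} of Borel probability measures on [0,∞) and a system {ε_u}_{u∈V} of nonnegative real numbers such that for every u ∈ V and every Borel set σ ⊆ [0,∞), μ_u(σ) = ∑_{v∈Chi(u)} |λ_v|² ∫_σ (1/s) dμ_v(s) + ε_u δ₀(σ). -/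
open MeasureTheory ENNReal
open scoped NNReal
noncomputable section

section Aux1
universe u
variable {H : Type u} [NormedAddCommGroup H] [InnerProductSpace ℂ H]

theorem pmapComp_mem {P Q : H →ₗ.[ℂ] H} {f : H} (hf : f ∈ (pmapComp P Q).domain) :
    ∃ hQ : f ∈ Q.domain, Q ⟨f, hQ⟩ ∈ P.domain := by
  have h1 : f ∈ compDomain P Q ⊓ Q.domain := hf
  exact (Submodule.mem_inf.mp h1).1

theorem pmapComp_apply {P Q : H →ₗ.[ℂ] H} {f : H} (hf : f ∈ (pmapComp P Q).domain)
    (hQ : f ∈ Q.domain) (hP : Q ⟨f, hQ⟩ ∈ P.domain) :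
    pmapComp P Q ⟨f, hf⟩ = P ⟨Q ⟨f, hQ⟩, hP⟩ := by
  show P.toFun _ = P.toFun _
  congr 1

theorem pmapPow_zero_apply (S : H →ₗ.[ℂ] H) (f : H) (hf : f ∈ (pmapPow S 0).domain) :
    pmapPow S 0 ⟨f, hf⟩ = f := rfl

end Aux1
section Aux2
variable {V : Type*} (T : DirectedTree V) (lam : V → ℂ)

theorem shift_apply_coe (f : (T.shift lam).domain) :
    (((T.shift lam) f : lp (fun _ : V => ℂ) 2) : V → ℂ) = T.lamMap lam (f : lp (fun _ : V => ℂ) 2) := rfl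

theorem pmapPow_shift_coe : ∀ (n : ℕ) (f : lp (fun _ : V => ℂ) 2)
    (hf : f ∈ (pmapPow (T.shift lam) n).domain),
    ((pmapPow (T.shift lam) n ⟨f, hf⟩ : lp (fun _ : V => ℂ) 2) : V → ℂ)
      = (T.lamMap lam)^[n] (f : V → ℂ)
  | 0, f, hf => rfl
  | n + 1, f, hf => by
    obtain ⟨hQ, hP⟩ := pmapComp_mem hf
    have h1 : pmapPow (T.shift lam) (n+1) ⟨f, hf⟩
        = pmapPow (T.shift lam) n ⟨(T.shift lam) ⟨f, hQ⟩, hP⟩ :=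
      pmapComp_apply hf hQ hP
    rw [h1, pmapPow_shift_coe n _ hP, shift_apply_coe, Function.iterate_succ_apply]

end Aux2
section Aux3
variable {V : Type*} (T : DirectedTree V) (lam : V → ℂ)

/-- validity of the length-`n` ancestor path ending at `x` -/
def pathOK (n : ℕ) (x : V) : Prop := ∀ j < n, T.nonRoot (T.par^[j] x)

open Classical in
/-- the coefficient of `f (par^[n] x)` in `(Λ_T^n f) x` -/
def wgt (n : ℕ) (x : V) : ℂ :=
  if pathOK T n x then ∏ j ∈ Finset.range n, lam (T.par^[j] x) else 0

theorem lamMap_iterate (n : ℕ) (f : V → ℂ) (x : V) :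
    (T.lamMap lam)^[n] f x = wgt T lam n x * f (T.par^[n] x) := by
  classical
  induction n generalizing f x with
  | zero => simp [wgt, pathOK]
  | succ n ih =>
    rw [Function.iterate_succ_apply, ih]
    have hsplit : T.lamMap lam f (T.par^[n] x)
        = (if T.nonRoot (T.par^[n] x) then lam (T.par^[n] x) else 0) * f (T.par^[n+1] x) := by
      rw [Function.iterate_succ_apply']
      by_cases h : T.nonRoot (T.par^[n] x)
      · simp [DirectedTree.lamMap, h]
      · simp [DirectedTree.lamMap, h]
    rw [hsplit, ← mul_assoc]
    congr 1
    by_cases h1 : pathOK T n x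
    · by_cases h2 : T.nonRoot (T.par^[n] x)
      · have h3 : pathOK T (n+1) x := by
          intro j hj
          rcases Nat.lt_succ_iff_lt_or_eq.mp hj with h | h
          · exact h1 j h
          · subst h; exact h2
        simp only [wgt, if_pos h1, if_pos h2, if_pos h3, Finset.prod_range_succ]
      · have h3 : ¬ pathOK T (n+1) x := fun h => h2 (h n (Nat.lt_succ_self n))
        simp [wgt, if_pos h1, if_neg h2, if_neg h3]
    · have h3 : ¬ pathOK T (n+1) x := fun h => h1 (fun j hj => h j (hj.trans (Nat.lt_succ_self n)))
      simp [wgt, if_neg h1, if_neg h3]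

end Aux3
section Aux4
variable {V : Type*} (T : DirectedTree V) (lam : V → ℂ)

open Classical in
def eFun (u : V) : V → ℂ := fun x => if x = u then 1 else 0

theorem eVec_coe (u : V) : ((eVec u : lp (fun _ : V => ℂ) 2) : V → ℂ) = eFun u := by
  classical
  funext x
  by_cases h : x = u
  · subst h
    simp [eVec, lp.single_apply_self, eFun]
  · simp [eVec, lp.single_apply_ne 2 u _ h, eFun, h]

def N2 {V : Type*} (f : V → ℂ) : ℝ≥0∞ := ∑' x, (‖f x‖₊ : ℝ≥0∞)^2

theorem ofReal_norm_sq (g : lp (fun _ : V => ℂ) 2) :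
    ENNReal.ofReal (‖g‖ ^ 2) = N2 (g : V → ℂ) := by
  have hp : (0:ℝ) < (2 : ℝ≥0∞).toReal := by norm_num
  have h := lp.norm_rpow_eq_tsum hp g
  have h2 : (2 : ℝ≥0∞).toReal = ((2:ℕ):ℝ) := by norm_num
  rw [h2] at h
  simp only [Real.rpow_natCast] at h
  rw [h, ENNReal.ofReal_tsum_of_nonneg (fun x => by positivity)]
  · refine tsum_congr fun x => ?_
    rw [ENNReal.ofReal_pow (norm_nonneg _), ofReal_norm, enorm_eq_nnnorm]
  · have := (lp.memℓp g).summable hp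
    rw [h2] at this
    simpa only [Real.rpow_natCast] using this

theorem N2_eFun (u : V) : N2 (eFun u : V → ℂ) = 1 := by
  classical
  unfold N2
  rw [tsum_eq_single u]
  · simp [eFun]
  · intro b hb
    simp [eFun, hb]

/-- the ENNReal moment `‖S^n e_w‖²` -/
def tE (w : V) (n : ℕ) : ℝ≥0∞ := N2 ((T.lamMap lam)^[n] (eFun w))

theorem tE_zero (w : V) : tE T lam w 0 = 1 := N2_eFun w

theorem momentSeq_eq {w : V} (hw : ∀ n, eVec w ∈ (pmapPow (T.shift lam) n).domain) (n : ℕ) :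
    ENNReal.ofReal (momentSeq (T.shift lam) (eVec w) n) = tE T lam w n := by
  unfold momentSeq powApp
  rw [dif_pos (hw n), ofReal_norm_sq, pmapPow_shift_coe, eVec_coe]
  rfl

theorem edge_iff (u x : V) : (T.nonRoot x ∧ T.par x = u) ↔ T.edge u x := by
  classical
  constructor
  · rintro ⟨hnr, hpar⟩
    have h : T.par x = hnr.choose := dif_pos hnr
    rw [h] at hpar
    rw [← hpar]
    exact hnr.choose_spec
  · intro he
    have hnr : T.nonRoot x := ⟨u, he⟩
    refine ⟨hnr, ?_⟩
    have h : T.par x = hnr.choose := dif_pos hnr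
    rw [h]
    exact T.parent_unique x _ _ hnr.choose_spec he

open Classical in
theorem lamMap_eFun (u : V) (x : V) :
    T.lamMap lam (eFun u) x = if T.edge u x then lam x else 0 := by
  classical
  unfold DirectedTree.lamMap eFun
  by_cases hnr : T.nonRoot x
  · rw [if_pos hnr]
    by_cases hp : T.par x = u
    · rw [if_pos hp, if_pos ((edge_iff T u x).mp ⟨hnr, hp⟩), mul_one]
    · rw [if_neg hp, mul_zero, if_neg]
      intro he
      exact hp ((edge_iff T u x).mpr he).2
  · rw [if_neg hnr, if_neg]
    intro he
    exact hnr ⟨u, he⟩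

/-- the fiber sum of squared path products -/
def Afib (n : ℕ) (v : V) : ℝ≥0∞ :=
  ∑' x : {x : V // T.par^[n] x = v}, (‖wgt T lam n (x : V)‖₊ : ℝ≥0∞)^2

theorem N2_iterate (n : ℕ) (f : V → ℂ) :
    N2 ((T.lamMap lam)^[n] f) = ∑' v : V, (‖f v‖₊ : ℝ≥0∞)^2 * Afib T lam n v := by
  unfold N2
  have h1 : ∀ x : V, (‖(T.lamMap lam)^[n] f x‖₊ : ℝ≥0∞)^2
      = (‖wgt T lam n x‖₊ : ℝ≥0∞)^2 * (‖f (T.par^[n] x)‖₊ : ℝ≥0∞)^2 := by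
    intro x
    rw [lamMap_iterate, nnnorm_mul, ENNReal.coe_mul, mul_pow]
  calc ∑' x : V, (‖(T.lamMap lam)^[n] f x‖₊ : ℝ≥0∞)^2
      = ∑' p : Σ v : V, {x : V // T.par^[n] x = v},
          (‖(T.lamMap lam)^[n] f ((Equiv.sigmaFiberEquiv (fun x : V => T.par^[n] x)) p)‖₊ : ℝ≥0∞)^2 :=
        ((Equiv.sigmaFiberEquiv (fun x : V => T.par^[n] x)).tsum_eq _).symm
    _ = ∑' p : Σ v : V, {x : V // T.par^[n] x = v},
          (fun (v : V) (x : {x : V // T.par^[n] x = v}) =>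
            (‖wgt T lam n (x : V)‖₊ : ℝ≥0∞)^2 * (‖f v‖₊ : ℝ≥0∞)^2) p.1 p.2 := by
        refine tsum_congr fun p => ?_
        obtain ⟨v, x⟩ := p
        have hx : T.par^[n] (x : V) = v := x.2
        show (‖(T.lamMap lam)^[n] f (x : V)‖₊ : ℝ≥0∞)^2 = _
        rw [h1, hx]
    _ = ∑' v : V, ∑' x : {x : V // T.par^[n] x = v},
          (‖wgt T lam n (x : V)‖₊ : ℝ≥0∞)^2 * (‖f v‖₊ : ℝ≥0∞)^2 :=
        ENNReal.tsum_sigma (fun (v : V) (x : {x : V // T.par^[n] x = v}) =>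
          (‖wgt T lam n (x : V)‖₊ : ℝ≥0∞)^2 * (‖f v‖₊ : ℝ≥0∞)^2)
    _ = ∑' v : V, (‖f v‖₊ : ℝ≥0∞)^2 * Afib T lam n v := by
        refine tsum_congr fun v => ?_
        rw [ENNReal.tsum_mul_right, mul_comm]
        rfl

theorem tE_eq_Afib (v : V) (n : ℕ) : tE T lam v n = Afib T lam n v := by
  classical
  rw [tE, N2_iterate, tsum_eq_single v]
  · simp [eFun]
  · intro b hb
    simp [eFun, hb]

theorem tE_succ (u : V) (n : ℕ) :
    tE T lam u (n+1) = ∑' v : {v : V // T.edge u v},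
      (‖lam (v : V)‖₊ : ℝ≥0∞)^2 * tE T lam (v : V) n := by
  classical
  have h0 : tE T lam u (n+1) = N2 ((T.lamMap lam)^[n] (T.lamMap lam (eFun u))) := by
    rw [tE, Function.iterate_succ_apply]
  rw [h0, N2_iterate]
  have hsupp : Function.support (fun v : V => (‖T.lamMap lam (eFun u) v‖₊ : ℝ≥0∞)^2 * Afib T lam n v)
      ⊆ {v : V | T.edge u v} := by
    intro v hv
    rw [Function.mem_support] at hv
    by_contra hne
    apply hv
    show (‖T.lamMap lam (eFun u) v‖₊ : ℝ≥0∞)^2 * Afib T lam n v = 0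
    rw [lamMap_eFun, if_neg (show ¬ T.edge u v from hne)]
    simp
  rw [← tsum_subtype_eq_of_support_subset hsupp]
  refine tsum_congr fun v => ?_
  show (‖T.lamMap lam (eFun u) (v : V)‖₊ : ℝ≥0∞)^2 * Afib T lam n (v : V) = _
  rw [lamMap_eFun, if_pos (show T.edge u (v : V) from v.2), tE_eq_Afib]

end Aux4
section Aux5

theorem ofReal_pow_nnreal (s : ℝ≥0) (n : ℕ) :
    ENNReal.ofReal ((s : ℝ) ^ n) = (s : ℝ≥0∞) ^ n := by
  rw [← NNReal.coe_pow, ENNReal.ofReal_coe_nnreal, ENNReal.coe_pow]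

theorem isRep_lintegral {μ : Measure ℝ≥0} {t : ℕ → ℝ} (hμ : IsRepMeasure μ t) (n : ℕ) :
    ∫⁻ s, (s : ℝ≥0∞) ^ n ∂μ = ENNReal.ofReal (t n) := by
  rw [(hμ n).2, MeasureTheory.ofReal_integral_eq_lintegral_ofReal (hμ n).1
    (Filter.Eventually.of_forall fun s => by positivity)]
  exact (lintegral_congr fun s => ofReal_pow_nnreal s n).symm

theorem isRep_nonneg {μ : Measure ℝ≥0} {t : ℕ → ℝ} (hμ : IsRepMeasure μ t) (n : ℕ) :
    0 ≤ t n := by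
  rw [(hμ n).2]
  exact integral_nonneg fun s => by positivity

theorem isRep_of_lintegral {ν : Measure ℝ≥0} {t : ℕ → ℝ} (ht : ∀ n, 0 ≤ t n)
    (hl : ∀ n, ∫⁻ s, (s : ℝ≥0∞) ^ n ∂ν = ENNReal.ofReal (t n)) : IsRepMeasure ν t := by
  intro n
  have hmeas : Measurable (fun s : ℝ≥0 => (s : ℝ) ^ n) :=
    measurable_coe_nnreal_real.pow_const n
  have hofReal : ∫⁻ s, ENNReal.ofReal ((s : ℝ) ^ n) ∂ν = ENNReal.ofReal (t n) := by
    rw [← hl n]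
    exact lintegral_congr fun s => ofReal_pow_nnreal s n
  have hint : Integrable (fun s : ℝ≥0 => (s : ℝ) ^ n) ν := by
    refine ⟨hmeas.aestronglyMeasurable, ?_⟩
    rw [hasFiniteIntegral_iff_norm]
    have : ∫⁻ s, ENNReal.ofReal ‖(s : ℝ) ^ n‖ ∂ν = ENNReal.ofReal (t n) := by
      rw [← hofReal]
      exact lintegral_congr fun s => by rw [Real.norm_of_nonneg (by positivity)]
    rw [this]
    exact ENNReal.ofReal_lt_top
  refine ⟨hint, ?_⟩
  rw [MeasureTheory.integral_eq_lintegral_of_nonneg_ae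
    (Filter.Eventually.of_forall fun s => by positivity) hmeas.aestronglyMeasurable,
    hofReal, ENNReal.toReal_ofReal (ht n)]

theorem isRep_withDensity {κ : Measure ℝ≥0} {t : ℕ → ℝ} (hκ : IsRepMeasure κ t) :
    IsRepMeasure (κ.withDensity (fun s => (s : ℝ≥0∞))) (fun n => t (n + 1)) := by
  refine isRep_of_lintegral (fun n => isRep_nonneg hκ (n + 1)) fun n => ?_
  rw [MeasureTheory.lintegral_withDensity_eq_lintegral_mul κ measurable_coe_nnreal_ennreal
    ((measurable_coe_nnreal_ennreal).pow_const n)]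
  rw [← isRep_lintegral hκ (n + 1)]
  exact lintegral_congr fun s => by
    simp only [Pi.mul_apply, pow_succ]
    ring

end Aux5

/-- under determinacy, a consistent system of Borel probability measures
(and nonnegative constants) exists. -/
theorem stmt10 {V : Type*} (T : DirectedTree V) (lam : V → ℂ)
    (hdom : (Submodule.span ℂ (Set.range (eVec (V := V))) : Set (lp (fun _ : V => ℂ) 2)) ⊆ Dinf (T.shift lam))
    (h : ∀ u : V, (∃ v : V, T.edge u v) →
      IsStieltjesMoment (momentSeq (T.shift lam) (eVec u))
      ∧ IsDetStieltjesMoment (fun n => momentSeq (T.shift lam) (eVec u) (n + 1))) :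
    ∃ (μ : V → Measure ℝ≥0) (ε : V → ℝ≥0),
      (∀ v : V, IsProbabilityMeasure (μ v)) ∧ ∀ u : V, consistentAt T lam μ ε u := by
  classical
  have hDinf : ∀ (w : V) (n : ℕ), eVec w ∈ (pmapPow (T.shift lam) n).domain := fun w n =>
    hdom (Submodule.subset_span ⟨w, rfl⟩) n
  set t : V → ℕ → ℝ := fun w => momentSeq (T.shift lam) (eVec w) with ht_def
  have ht_ofReal : ∀ w n, ENNReal.ofReal (t w n) = tE T lam w n :=
    fun w n => momentSeq_eq T lam (hDinf w) n
  have ht_nonneg : ∀ w n, 0 ≤ t w n := fun w n => pow_nonneg (norm_nonneg _) 2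
  set κ : V → Measure ℝ≥0 :=
    fun u => if hu : ∃ v, T.edge u v then (h u hu).1.choose else 0 with hκ_def
  have hκrep : ∀ u, (∃ v, T.edge u v) → IsRepMeasure (κ u) (t u) := by
    intro u hu
    simp only [hκ_def, dif_pos hu]
    exact (h u hu).1.choose_spec
  have hκuniv : ∀ u, (∃ v, T.edge u v) → κ u Set.univ = 1 := by
    intro u hu
    have h1 : ∫⁻ s, (s : ℝ≥0∞) ^ 0 ∂(κ u) = ENNReal.ofReal (t u 0) :=
      isRep_lintegral (hκrep u hu) 0
    simp only [pow_zero, lintegral_one] at h1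
    rw [h1, ht_ofReal, tE_zero]
  have hκcompl_le : ∀ u, (∃ v, T.edge u v) → κ u {0}ᶜ ≤ 1 := fun u hu =>
    (measure_mono (Set.subset_univ _)).trans (hκuniv u hu).le
  set ε : V → ℝ≥0 :=
    fun u => if hu : ∃ v, T.edge u v then ((1 : ℝ≥0∞) - κ u {0}ᶜ).toNNReal else 1 with hε_def
  set μ : V → Measure ℝ≥0 := fun u =>
    if hu : ∃ v, T.edge u v then
      (κ u).restrict {0}ᶜ + ((1 : ℝ≥0∞) - κ u {0}ᶜ) • Measure.dirac 0
    else Measure.dirac 0 with hμ_def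
  have hεcoe : ∀ u, (∃ v, T.edge u v) → (ε u : ℝ≥0∞) = 1 - κ u {0}ᶜ := by
    intro u hu
    simp only [hε_def, dif_pos hu]
    exact ENNReal.coe_toNNReal (lt_of_le_of_lt tsub_le_self ENNReal.one_lt_top).ne
  -- moments of the constructed measures
  have hmom : ∀ w n, ∫⁻ s, (s : ℝ≥0∞) ^ n ∂(μ w) = tE T lam w n := by
    intro w n
    by_cases hw : ∃ v, T.edge w v
    · simp only [hμ_def, dif_pos hw]
      rw [lintegral_add_measure, lintegral_smul_measure, smul_eq_mul, lintegral_dirac]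
      cases n with
      | zero =>
        simp only [pow_zero, lintegral_one, mul_one, Measure.restrict_apply_univ]
        rw [tE_zero, add_tsub_cancel_of_le (hκcompl_le w hw)]
      | succ n =>
        have h0 : ((0 : ℝ≥0) : ℝ≥0∞) ^ (n + 1) = 0 := by simp
        rw [h0, mul_zero, add_zero]
        have hsplit := lintegral_add_compl (μ := κ w)
          (fun s : ℝ≥0 => (s : ℝ≥0∞) ^ (n + 1)) (measurableSet_singleton (0 : ℝ≥0)).compl
        rw [compl_compl] at hsplit
        have hz : ∫⁻ s in ({0} : Set ℝ≥0), (s : ℝ≥0∞) ^ (n + 1) ∂(κ w) = 0 := by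
          rw [MeasureTheory.lintegral_singleton (fun s : ℝ≥0 => (s : ℝ≥0∞) ^ (n + 1)) (0 : ℝ≥0)]
          simp
        rw [hz, add_zero] at hsplit
        rw [hsplit, isRep_lintegral (hκrep w hw) (n + 1), ht_ofReal]
    · simp only [hμ_def, dif_neg hw]
      rw [lintegral_dirac]
      haveI hE : IsEmpty {v : V // T.edge w v} := ⟨fun v => hw ⟨v, v.2⟩⟩
      cases n with
      | zero => rw [pow_zero, tE_zero]
      | succ n =>
        rw [tE_succ, tsum_empty]
        simp
  -- the measure ν u equals the density measure, by determinacy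
  have hν : ∀ u, (∃ v, T.edge u v) →
      Measure.sum (fun v : {v : V // T.edge u v} => ((‖lam (v : V)‖₊ : ℝ≥0∞) ^ 2) • μ (v : V))
        = (κ u).withDensity (fun s => (s : ℝ≥0∞)) := by
    intro u hu
    have hrepν : IsRepMeasure
        (Measure.sum (fun v : {v : V // T.edge u v} => ((‖lam (v : V)‖₊ : ℝ≥0∞) ^ 2) • μ (v : V)))
        (fun n => t u (n + 1)) := by
      refine isRep_of_lintegral (fun n => ht_nonneg u (n + 1)) fun n => ?_
      rw [lintegral_sum_measure]
      have hterm : ∀ v : {v : V // T.edge u v},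
          ∫⁻ s, (s : ℝ≥0∞) ^ n ∂(((‖lam (v : V)‖₊ : ℝ≥0∞) ^ 2) • μ (v : V))
            = (‖lam (v : V)‖₊ : ℝ≥0∞) ^ 2 * tE T lam (v : V) n := fun v => by
        rw [lintegral_smul_measure, hmom, smul_eq_mul]
      rw [tsum_congr hterm, ← tE_succ, ht_ofReal]
    have hrepρ : IsRepMeasure ((κ u).withDensity (fun s => (s : ℝ≥0∞))) (fun n => t u (n + 1)) :=
      isRep_withDensity (hκrep u hu)
    obtain ⟨ρ, _, huniq⟩ := (h u hu).2
    rw [huniq _ hrepν, huniq _ hrepρ]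
  refine ⟨μ, ε, fun w => ⟨?_⟩, fun u => ?_⟩
  · have h1 := hmom w 0
    simp only [pow_zero, lintegral_one, tE_zero] at h1
    exact h1
  · intro σ hσ
    by_cases hu : ∃ v, T.edge u v
    · have hRHS : (∑' v : {v : V // T.edge u v},
          (‖lam (v : V)‖₊ : ℝ≥0∞) ^ 2 * ∫⁻ s in σ, ((s : ℝ≥0∞))⁻¹ ∂(μ (v : V)))
          = (κ u).restrict {0}ᶜ σ := by
        have h1 : ∀ v : {v : V // T.edge u v},
            (‖lam (v : V)‖₊ : ℝ≥0∞) ^ 2 * ∫⁻ s in σ, ((s : ℝ≥0∞))⁻¹ ∂(μ (v : V))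
              = ∫⁻ s, ((s : ℝ≥0∞))⁻¹
                  ∂((((‖lam (v : V)‖₊ : ℝ≥0∞) ^ 2) • μ (v : V)).restrict σ) := fun v => by
          rw [Measure.restrict_smul, lintegral_smul_measure, smul_eq_mul]
        rw [tsum_congr h1, ← lintegral_sum_measure, ← Measure.restrict_sum _ hσ, hν u hu,
          MeasureTheory.restrict_withDensity hσ,
          lintegral_withDensity_eq_lintegral_mul _ (f := fun s : ℝ≥0 => (s : ℝ≥0∞))
            measurable_coe_nnreal_ennreal (g := fun s : ℝ≥0 => ((s : ℝ≥0∞))⁻¹)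
            measurable_coe_nnreal_ennreal.inv]
        have h2 : ∀ s : ℝ≥0, ((fun s : ℝ≥0 => (s : ℝ≥0∞))
            * fun s : ℝ≥0 => ((s : ℝ≥0∞))⁻¹) s
              = ({0}ᶜ : Set ℝ≥0).indicator (fun _ => (1 : ℝ≥0∞)) s := by
          intro s
          by_cases hs : s = 0
          · subst hs
            simp
          · rw [Pi.mul_apply, ENNReal.mul_inv_cancel (by exact_mod_cast hs) ENNReal.coe_ne_top,
              Set.indicator_of_mem (by simp [hs])]
        rw [lintegral_congr h2, lintegral_indicator (measurableSet_singleton (0 : ℝ≥0)).compl,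
          setLIntegral_one, Measure.restrict_apply (measurableSet_singleton (0 : ℝ≥0)).compl,
          Measure.restrict_apply hσ, Set.inter_comm]
      rw [hRHS]
      simp only [hμ_def, dif_pos hu]
      rw [Measure.add_apply, Measure.smul_apply, smul_eq_mul, hεcoe u hu]
    · haveI hE : IsEmpty {v : V // T.edge u v} := ⟨fun v => hu ⟨v, v.2⟩⟩
      rw [tsum_empty, zero_add]
      simp only [hμ_def, hε_def, dif_neg hu]
      rw [ENNReal.coe_one, one_mul]

end
end
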